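/- For any graph G and integer k ≥ 1, the minimum size of a vertex cover of G_k equals k times the minimum size of a vertex cover of G, provided G has a perfect matching between a minimum vertex cover and its complement. More precisely: if G is very well-covered with 2h vertices, then the minimum vertex cover size of G_k equals kh. -/

import Mathlib

/-- The graph `G_k`. -/
def graphPower {V : Type*} (G : SimpleGraph V) (k : ℕ) : SimpleGraph (V × Fin k) where
  Adj a b := G.Adj a.1 b.1 ∧ a.2.val + b.2.val + 2 ≤ k + 1
  symm := ⟨by rintro a b ⟨h1, h2⟩; exact ⟨h1.symm, by omega⟩⟩
  loopless := ⟨by rintro a ⟨h1, _⟩; exact G.ne_of_adj h1 rfl⟩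

/-- `C` is a vertex cover of `G`. -/
def IsVC {V : Type*} (G : SimpleGraph V) (C : Set V) : Prop :=
  ∀ ⦃u v : V⦄, G.Adj u v → u ∈ C ∨ v ∈ C

/-- `A` is an independent set of `G`. -/
def IsIndep {V : Type*} (G : SimpleGraph V) (A : Set V) : Prop :=
  ∀ u ∈ A, ∀ v ∈ A, ¬ G.Adj u v

/-- `A` is a maximal independent set of `G`. -/
def IsMaxIndep {V : Type*} (G : SimpleGraph V) (A : Set V) : Prop :=
  IsIndep G A ∧ ∀ B : Set V, IsIndep G B → A ⊆ B → B = A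

/-- Neighborhood of a set of vertices. -/
def nbhd {V : Type*} (G : SimpleGraph V) (S : Set V) : Set V := {v | ∃ s ∈ S, G.Adj s v}

/-- Any independent subset of `U` extends to one maximal relative to `U`. -/
lemma exists_relMax {V : Type*} [Fintype V] (G : SimpleGraph V) (U I : Set V)
    (hI : IsIndep G I) (hIU : I ⊆ U) :
    ∃ J : Set V, IsIndep G J ∧ I ⊆ J ∧ J ⊆ U ∧ ∀ u ∈ U, u ∉ J → ∃ j ∈ J, G.Adj j u := by
  classical
  set 𝒮 : Set ℕ := {n | ∃ J : Set V, (IsIndep G J ∧ I ⊆ J ∧ J ⊆ U) ∧ J.ncard = n} with h𝒮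
  have hne : 𝒮.Nonempty := ⟨I.ncard, I, ⟨hI, subset_rfl, hIU⟩, rfl⟩
  have hbdd : BddAbove 𝒮 := by
    refine ⟨Fintype.card V, ?_⟩
    rintro n ⟨J, -, rfl⟩
    have := Set.ncard_le_ncard (Set.subset_univ J) (Set.toFinite _)
    simpa [Set.ncard_univ, Nat.card_eq_fintype_card] using this
  obtain ⟨J, ⟨hJind, hIJ, hJU⟩, hJcard⟩ := Nat.sSup_mem hne hbdd
  refine ⟨J, hJind, hIJ, hJU, ?_⟩
  intro u huU huJ
  by_contra hno
  push_neg at hno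
  have hins : IsIndep G (insert u J) := by
    intro x hx y hy
    rcases Set.mem_insert_iff.mp hx with rfl | hxJ
    · rcases Set.mem_insert_iff.mp hy with rfl | hyJ
      · exact fun hadj => G.irrefl hadj
      · exact fun hadj => hno y hyJ hadj.symm
    · rcases Set.mem_insert_iff.mp hy with rfl | hyJ
      · exact fun hadj => hno x hxJ hadj
      · exact hJind x hxJ y hyJ
  have hmem : (insert u J).ncard ∈ 𝒮 :=
    ⟨insert u J, ⟨hins, hIJ.trans (Set.subset_insert _ _), Set.insert_subset huU hJU⟩, rfl⟩
  have hle := le_csSup hbdd hmem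
  rw [Set.ncard_insert_of_notMem huJ] at hle
  omega

lemma isMaxIndep_of_dominating {V : Type*} [Fintype V] (G : SimpleGraph V) (J : Set V)
    (hJ : IsIndep G J) (hdom : ∀ u, u ∉ J → ∃ j ∈ J, G.Adj j u) : IsMaxIndep G J := by
  refine ⟨hJ, fun B hB hJB => ?_⟩
  refine Set.Subset.antisymm (fun v hv => ?_) hJB
  by_contra hvJ
  obtain ⟨j, hjJ, hadj⟩ := hdom v hvJ
  exact hB j (hJB hjJ) v hv hadj

lemma exists_maxIndep_superset {V : Type*} [Fintype V] (G : SimpleGraph V) (I : Set V)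
    (hI : IsIndep G I) : ∃ J, IsMaxIndep G J ∧ I ⊆ J := by
  obtain ⟨J, h1, h2, h3, h4⟩ := exists_relMax G Set.univ I hI (Set.subset_univ I)
  exact ⟨J, isMaxIndep_of_dominating G J h1 (fun u hu => h4 u (Set.mem_univ u) hu), h2⟩

/-- Hall's condition for independent sets in very well-covered graphs. -/
lemma hall_indep {V : Type*} [Fintype V] (G : SimpleGraph V) (h : ℕ)
    (hiso : ∀ v : V, ∃ u, G.Adj v u)
    (hwc : ∀ A : Set V, IsMaxIndep G A → A.ncard = h) :
    ∀ S : Set V, IsIndep G S → S.ncard ≤ (nbhd G S).ncard := by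
  classical
  suffices hsuff : ∀ n, ∀ S : Set V, S.ncard = n → IsIndep G S → S.ncard ≤ (nbhd G S).ncard by
    exact fun S hS => hsuff S.ncard S rfl hS
  intro n
  induction n using Nat.strong_induction_on with
  | _ n IH =>
  intro S hSn hS
  by_contra hlt
  push_neg at hlt
  have hSne : S.Nonempty := by
    rcases Set.eq_empty_or_nonempty S with rfl | hne
    · simp at hlt
    · exact hne
  set Y : Set V := nbhd G S with hYdef
  set W : Set V := (S ∪ Y)ᶜ with hWdef
  have hSYdisj : ∀ v ∈ S, v ∉ Y := by
    rintro v hv ⟨s, hsS, hadj⟩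
    exact hS s hsS v hv hadj
  -- any independent subset of W together with S stays within a maximal independent set
  have hWX : ∀ X : Set V, X ⊆ W → IsIndep G X → S.ncard + X.ncard ≤ h := by
    intro X hXW hXind
    obtain ⟨Xh, hXh_ind, hXXh, hXhW, hXhmax⟩ := exists_relMax G W X hXind hXW
    have hXhS : ∀ x ∈ Xh, ∀ s ∈ S, ¬ G.Adj s x := by
      intro x hx s hsS hadj
      exact (hXhW hx) (Or.inr ⟨s, hsS, hadj⟩)
    have hJind : IsIndep G (S ∪ Xh) := by
      intro u hu v hv
      rcases hu with hu | hu <;> rcases hv with hv | hv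
      · exact hS u hu v hv
      · exact fun hadj => hXhS v hv u hu hadj
      · exact fun hadj => hXhS u hu v hv hadj.symm
      · exact hXh_ind u hu v hv
    have hJmax : IsMaxIndep G (S ∪ Xh) := by
      refine isMaxIndep_of_dominating G _ hJind ?_
      intro u hu
      have huS : u ∉ S := fun hc => hu (Or.inl hc)
      have huXh : u ∉ Xh := fun hc => hu (Or.inr hc)
      by_cases huY : u ∈ Y
      · obtain ⟨s, hsS, hadj⟩ := huY
        exact ⟨s, Or.inl hsS, hadj⟩
      · have huW : u ∈ W := by
          intro hmem
          rcases hmem with hmem | hmem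
          · exact huS hmem
          · exact huY hmem
        obtain ⟨j, hj, hadj⟩ := hXhmax u huW huXh
        exact ⟨j, Or.inr hj, hadj⟩
    have hcard := hwc _ hJmax
    have hdisj2 : Disjoint S Xh := Set.disjoint_left.mpr (fun v hv hv2 => (hXhW hv2) (Or.inl hv))
    rw [Set.ncard_union_eq hdisj2 (Set.toFinite _) (Set.toFinite _)] at hcard
    have hXle := Set.ncard_le_ncard hXXh (Set.toFinite _)
    omega
  obtain ⟨s0, hs0⟩ := hSne
  obtain ⟨u0, hu0⟩ := hiso s0
  have hy0 : u0 ∈ Y := ⟨s0, hs0, hu0⟩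
  have hsing : IsIndep G {u0} := by
    intro x hx y hy
    rw [Set.mem_singleton_iff] at hx hy
    subst hx; subst hy
    exact fun hadj => G.irrefl hadj
  obtain ⟨P, hPind, hu0P, hPY, hPmax⟩ :=
    exists_relMax G Y {u0} hsing (Set.singleton_subset_iff.mpr hy0)
  have hu0P' : u0 ∈ P := hu0P rfl
  set SP : Set V := {s ∈ S | ∃ p ∈ P, G.Adj p s} with hSPdef
  have hSPS : SP ⊆ S := fun s hs => hs.1
  have hSPne : SP.Nonempty := ⟨s0, hs0, u0, hu0P', hu0.symm⟩
  obtain ⟨X, hXind, -, hXsub, hXmax⟩ :=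
    exists_relMax G (W \ nbhd G P) ∅ (fun u hu => absurd hu (Set.notMem_empty u))
      (Set.empty_subset _)
  have hXW : X ⊆ W := fun x hx => (hXsub hx).1
  have hXnb : ∀ x ∈ X, x ∉ nbhd G P := fun x hx => (hXsub hx).2
  set J : Set V := P ∪ ((S \ SP) ∪ X) with hJdef
  have hPS'' : ∀ p ∈ P, ∀ s ∈ S \ SP, ¬ G.Adj p s := by
    intro p hp s hsd hadj
    exact hsd.2 ⟨hsd.1, p, hp, hadj⟩
  have hPX : ∀ p ∈ P, ∀ x ∈ X, ¬ G.Adj p x := by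
    intro p hp x hx hadj
    exact hXnb x hx ⟨p, hp, hadj⟩
  have hSX : ∀ s ∈ S, ∀ x ∈ X, ¬ G.Adj s x := by
    intro s hsS x hx hadj
    exact (hXW hx) (Or.inr ⟨s, hsS, hadj⟩)
  have hJind : IsIndep G J := by
    intro u hu v hv
    rcases hu with hu | hu
    · rcases hv with hv | hv
      · exact hPind u hu v hv
      · rcases hv with hv | hv
        · exact hPS'' u hu v hv
        · exact hPX u hu v hv
    · rcases hu with hu | hu
      · rcases hv with hv | hv
        · exact fun hadj => hPS'' v hv u hu hadj.symm
        · rcases hv with hv | hv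
          · exact hS u hu.1 v hv.1
          · exact hSX u hu.1 v hv
      · rcases hv with hv | hv
        · exact fun hadj => hPX v hv u hu hadj.symm
        · rcases hv with hv | hv
          · exact fun hadj => hSX v hv.1 u hu hadj.symm
          · exact hXind u hu v hv
  have hJmax : IsMaxIndep G J := by
    refine isMaxIndep_of_dominating G _ hJind ?_
    intro u hu
    have huP : u ∉ P := fun hc => hu (Or.inl hc)
    by_cases huS : u ∈ S
    · have huSP : u ∈ SP := by
        by_contra hc
        exact hu (Or.inr (Or.inl ⟨huS, hc⟩))
      obtain ⟨-, p, hpP, hadj⟩ := huSP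
      exact ⟨p, Or.inl hpP, hadj⟩
    · by_cases huY : u ∈ Y
      · obtain ⟨p, hpP, hadj⟩ := hPmax u huY huP
        exact ⟨p, Or.inl hpP, hadj⟩
      · have huW : u ∈ W := by
          intro hmem
          rcases hmem with hmem | hmem
          · exact huS hmem
          · exact huY hmem
        by_cases hunb : u ∈ nbhd G P
        · obtain ⟨p, hpP, hadj⟩ := hunb
          exact ⟨p, Or.inl hpP, hadj⟩
        · have huX : u ∉ X := fun hc => hu (Or.inr (Or.inr hc))
          obtain ⟨x, hx, hadj⟩ := hXmax u ⟨huW, hunb⟩ huX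
          exact ⟨x, Or.inr (Or.inr hx), hadj⟩
  have hJcard := hwc _ hJmax
  have hdisjP : Disjoint P ((S \ SP) ∪ X) := by
    rw [Set.disjoint_left]
    intro v hvP hv
    rcases hv with hv | hv
    · exact hSYdisj v hv.1 (hPY hvP)
    · exact (hXW hv) (Or.inr (hPY hvP))
  have hdisjSX : Disjoint (S \ SP) X := by
    rw [Set.disjoint_left]
    intro v hv hvX
    exact (hXW hvX) (Or.inl hv.1)
  rw [hJdef, Set.ncard_union_eq hdisjP (Set.toFinite _) (Set.toFinite _),
      Set.ncard_union_eq hdisjSX (Set.toFinite _) (Set.toFinite _)] at hJcard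
  have hXbound := hWX X hXW hXind
  have hPle : P.ncard ≤ Y.ncard := Set.ncard_le_ncard hPY (Set.toFinite _)
  have hdd : (S \ SP).ncard + SP.ncard = S.ncard :=
    Set.ncard_diff_add_ncard_of_subset hSPS (Set.toFinite _)
  have hSPpos : 0 < SP.ncard := (Set.ncard_pos (Set.toFinite _)).mpr hSPne
  have hPpos : 0 < P.ncard := (Set.ncard_pos (Set.toFinite _)).mpr ⟨u0, hu0P'⟩
  rcases Set.eq_empty_or_nonempty (S \ SP) with hSd | hSd
  · rw [hSd, Set.ncard_empty] at hJcard hdd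
    omega
  · have hIHa : (S \ SP).ncard ≤ (nbhd G (S \ SP)).ncard := by
      refine IH (S \ SP).ncard ?_ _ rfl ?_
      · omega
      · exact fun u hu v hv => hS u hu.1 v hv.1
    have hnbsub : nbhd G (S \ SP) ⊆ Y \ P := by
      rintro v ⟨s, hsd, hadj⟩
      refine ⟨⟨s, hsd.1, hadj⟩, ?_⟩
      intro hvP
      exact hsd.2 ⟨hsd.1, v, hvP, hadj.symm⟩
    have h5 : (nbhd G (S \ SP)).ncard ≤ (Y \ P).ncard :=
      Set.ncard_le_ncard hnbsub (Set.toFinite _)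
    have h6 : (Y \ P).ncard + P.ncard = Y.ncard :=
      Set.ncard_diff_add_ncard_of_subset hPY (Set.toFinite _)
    omega

/-- If `G` is a very well-covered graph with `2h` vertices (no isolated vertices,
every maximal independent set of size `h`), then the minimum size of a vertex
cover of `G_k` is `k*h`. -/
theorem stmt7 {V : Type*} [Fintype V] (G : SimpleGraph V) (h : ℕ)
    (hcard : Fintype.card V = 2 * h)
    (hiso : ∀ v : V, ∃ u, G.Adj v u)
    (hwc : ∀ A : Set V, IsMaxIndep G A → A.ncard = h)
    (k : ℕ) (hk : 1 ≤ k) :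
    sInf {c : ℕ | ∃ C : Set (V × Fin k), IsVC (graphPower G k) C ∧ C.ncard = c}
      = k * h := by
  classical
  obtain ⟨A, hAmax, -⟩ :=
    exists_maxIndep_superset G ∅ (fun u hu => absurd hu (Set.notMem_empty u))
  have hAind : IsIndep G A := hAmax.1
  have hAcard : A.ncard = h := hwc A hAmax
  have hAc : (Aᶜ).ncard = h := by
    have hcompl := Set.ncard_add_ncard_compl A
    rw [Nat.card_eq_fintype_card, hcard] at hcompl
    omega
  have hhall := hall_indep G h hiso hwc
  set t : ↥A → Finset V := fun a => (Set.toFinite {v | G.Adj ↑a v}).toFinset with htdef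
  have hmemt : ∀ (a : ↥A) (v : V), v ∈ t a ↔ G.Adj ↑a v := by
    intro a v
    simp [htdef, Set.Finite.mem_toFinset]
  have hall_cond : ∀ s : Finset ↥A, s.card ≤ (s.biUnion t).card := by
    intro s
    set T : Finset V := s.image Subtype.val with hTdef
    have hTsub : ↑T ⊆ A := by
      intro v hv
      rw [Finset.mem_coe, hTdef, Finset.mem_image] at hv
      obtain ⟨a, ha, rfl⟩ := hv
      exact a.2
    have hTind : IsIndep G ↑T := fun u hu v hv => hAind u (hTsub hu) v (hTsub hv)
    have h1 := hhall ↑T hTind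
    have hTcard : (↑T : Set V).ncard = T.card := Set.ncard_coe_finset T
    have hscard : T.card = s.card := Finset.card_image_of_injective s Subtype.val_injective
    have hnbsub : nbhd G ↑T ⊆ ↑(s.biUnion t) := by
      rintro v ⟨u, huT, hadj⟩
      rw [Finset.mem_coe, hTdef, Finset.mem_image] at huT
      obtain ⟨a, haS, rfl⟩ := huT
      rw [Finset.mem_coe, Finset.mem_biUnion]
      exact ⟨a, haS, (hmemt a v).mpr hadj⟩
    have h2 : (nbhd G ↑T).ncard ≤ (s.biUnion t).card := by
      have := Set.ncard_le_ncard hnbsub (Set.toFinite _)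
      rwa [Set.ncard_coe_finset] at this
    omega
  obtain ⟨f, hfinj, hft⟩ := (Finset.all_card_le_biUnion_card_iff_exists_injective t).mp hall_cond
  have hfadj : ∀ a : ↥A, G.Adj ↑a (f a) := fun a => (hmemt a (f a)).mp (hft a)
  have hfnA : ∀ a : ↥A, f a ∉ A := fun a ha => hAind ↑a a.2 (f a) ha (hfadj a)
  -- lower bound
  have hlower : ∀ C : Set (V × Fin k), IsVC (graphPower G k) C → k * h ≤ C.ncard := by
    intro C hC
    have hklt : ∀ p : Fin k, k - 1 - p.val < k := fun p => by omega
    set F : ↥A × Fin k → V × Fin k :=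
      fun ap => if ((ap.1 : V), ap.2) ∈ C then ((ap.1 : V), ap.2)
        else (f ap.1, ⟨k - 1 - ap.2.val, hklt ap.2⟩) with hFdef
    have hedge : ∀ ap : ↥A × Fin k,
        (graphPower G k).Adj ((ap.1 : V), ap.2) (f ap.1, ⟨k - 1 - ap.2.val, hklt ap.2⟩) := by
      intro ap
      refine ⟨hfadj ap.1, ?_⟩
      have := ap.2.isLt
      show (ap.2 : ℕ) + (k - 1 - (ap.2 : ℕ)) + 2 ≤ k + 1
      omega
    have hFC : ∀ ap, F ap ∈ C := by
      intro ap
      rw [hFdef]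
      dsimp only
      split_ifs with hmem
      · exact hmem
      · rcases hC (hedge ap) with hin | hin
        · exact absurd hin hmem
        · exact hin
    have hFinj : Function.Injective F := by
      intro x y hxy
      rw [hFdef] at hxy
      dsimp only at hxy
      have hx2 := x.2.isLt
      have hy2 := y.2.isLt
      split_ifs at hxy with h1 h2 h2
      · rw [Prod.mk.injEq] at hxy
        exact Prod.ext (Subtype.ext hxy.1) hxy.2
      · rw [Prod.mk.injEq] at hxy
        exact absurd (hxy.1 ▸ x.1.2) (hfnA y.1)
      · rw [Prod.mk.injEq] at hxy
        exact absurd (hxy.1.symm ▸ y.1.2) (hfnA x.1)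
      · rw [Prod.mk.injEq] at hxy
        have he1 : x.1 = y.1 := hfinj hxy.1
        have he2 : x.2 = y.2 := by
          have hv := congrArg Fin.val hxy.2
          simp only [Fin.val_mk] at hv
          exact Fin.ext (by omega)
        exact Prod.ext he1 he2
    have hinj2 : Function.Injective (fun ap : ↥A × Fin k => (⟨F ap, hFC ap⟩ : ↥C)) := by
      intro x y hxy
      exact hFinj (congrArg Subtype.val hxy)
    have hcle := Nat.card_le_card_of_injective _ hinj2
    rw [Nat.card_prod, Nat.card_coe_set_eq, Nat.card_coe_set_eq,
      Nat.card_eq_fintype_card, Fintype.card_fin, hAcard] at hcle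
    calc k * h = h * k := Nat.mul_comm k h
    _ ≤ C.ncard := hcle
  -- upper bound witness
  set C0 : Set (V × Fin k) := {x | x.1 ∈ Aᶜ} with hC0def
  have hC0vc : IsVC (graphPower G k) C0 := by
    intro u v hadj
    by_cases hu : u.1 ∈ A
    · right
      exact fun hvA => hAind u.1 hu v.1 hvA hadj.1
    · left
      exact hu
  have hC0card : C0.ncard = k * h := by
    have e : ↥C0 ≃ ↥(Aᶜ) × Fin k :=
      { toFun := fun x => (⟨x.1.1, x.2⟩, x.1.2)
        invFun := fun y => ⟨((y.1 : V), y.2), y.1.2⟩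
        left_inv := fun x => rfl
        right_inv := fun y => rfl }
    rw [← Nat.card_coe_set_eq, Nat.card_congr e, Nat.card_prod,
      Nat.card_coe_set_eq, Nat.card_eq_fintype_card, Fintype.card_fin, hAc,
      Nat.mul_comm]
  apply le_antisymm
  · exact Nat.sInf_le ⟨C0, hC0vc, hC0card⟩
  · refine le_csInf ⟨k * h, C0, hC0vc, hC0card⟩ ?_
    rintro c ⟨C, hCvc, rfl⟩
    exact hlower C hCvc
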